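/- arXiv:2109.07544 — 7 statements merged into one kernel-verified Lean document; each statement's English description precedes it below -/
import Mathlib

section
/- Let p < q be distinct primes with p > 2, m = (p-1)(q-1), and S the (m+1)×(m+1) shift matrix. Then the coefficient vector a of Φ_{pq} satisfies a = Σ_{i=0}^{p-2} S^{iq} c, where c = (Id - S) Φ_q(S^p) e_0. -/
open Polynomial

theorem aux_mulVec_single {n : ℕ} (S : Matrix (Fin (n+1)) (Fin (n+1)) ℚ)
    (hS : ∀ i j, S i j = if (i : ℕ) = (j : ℕ) + 1 then 1 else 0) (f : ℚ[X]) :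
    (aeval S f).mulVec (Pi.single 0 1) = fun j : Fin (n+1) => f.coeff (j : ℕ) := by
  have hpow : ∀ k : ℕ, (S ^ k).mulVec (Pi.single 0 1) =
      fun j : Fin (n+1) => if (j : ℕ) = k then 1 else 0 := by
    intro k
    induction k with
    | zero =>
      funext j
      rw [pow_zero, Matrix.one_mulVec, Pi.single_apply]
      simp only [Fin.ext_iff, Fin.val_zero]
    | succ k ih =>
      funext i
      rw [pow_succ', ← Matrix.mulVec_mulVec, ih]
      simp only [Matrix.mulVec, dotProduct, hS, ite_mul, one_mul, zero_mul]
      have hterm : ∀ j : Fin (n+1),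
          (if (i : ℕ) = (j : ℕ) + 1 then (if (j : ℕ) = k then (1:ℚ) else 0) else 0)
          = if (j : ℕ) = k then (if (i : ℕ) = k + 1 then (1:ℚ) else 0) else 0 := by
        intro j
        split_ifs with h1 h2 h3 <;> first | rfl | omega
      rw [Finset.sum_congr rfl (fun j _ => hterm j)]
      by_cases hk : k < n + 1
      · rw [Finset.sum_eq_single (⟨k, hk⟩ : Fin (n+1))]
        · simp
        · intro b _ hb
          have hb' : (b : ℕ) ≠ k := fun hh => hb (Fin.ext hh)
          simp [hb']
        · simp
      · have h1 : ∀ j : Fin (n+1), ¬ ((j : ℕ) = k) := fun j => by omega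
        have h2 : ¬ ((i : ℕ) = k + 1) := by omega
        simp [h1, h2]
  conv_lhs => rw [f.as_sum_range]
  rw [map_sum]
  funext j
  have hsum : ∀ (s : Finset ℕ) (A : ℕ → Matrix (Fin (n+1)) (Fin (n+1)) ℚ),
      (∑ k ∈ s, A k).mulVec (Pi.single 0 1) j = ∑ k ∈ s, (A k).mulVec (Pi.single 0 1) j := by
    intro s A
    simp only [Matrix.mulVec, dotProduct, Matrix.sum_apply, Finset.sum_mul]
    exact Finset.sum_comm
  rw [hsum]
  simp only [aeval_monomial]
  have hterm2 : ∀ k : ℕ, ((algebraMap ℚ _ (f.coeff k) * S ^ k).mulVec (Pi.single 0 1)) j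
      = f.coeff k * (if (j : ℕ) = k then 1 else 0) := by
    intro k
    rw [Algebra.algebraMap_eq_smul_one, smul_mul_assoc, one_mul,
      Matrix.smul_mulVec, hpow k]
    simp
  rw [Finset.sum_congr rfl (fun k _ => hterm2 k)]
  simp only [mul_ite, mul_one, mul_zero]
  rw [Finset.sum_ite_eq (Finset.range (f.natDegree + 1)) (j : ℕ) (fun k => f.coeff k)]
  split_ifs with h
  · rfl
  · rw [Finset.mem_range, not_lt] at h
    exact (coeff_eq_zero_of_natDegree_lt (by omega)).symm

theorem cyclotomic_coeff_vector_as_shift_sum (p q : ℕ) (hp : p.Prime) (hq : q.Prime)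
    (hlt : p < q) (hp2 : 2 < p)
    (S : Matrix (Fin ((p - 1) * (q - 1) + 1)) (Fin ((p - 1) * (q - 1) + 1)) ℚ)
    (hS : ∀ i j, S i j = if (i : ℕ) = (j : ℕ) + 1 then 1 else 0) :
    (fun j : Fin ((p - 1) * (q - 1) + 1) => (cyclotomic (p * q) ℚ).coeff (j : ℕ)) =
      ∑ i ∈ Finset.range (p - 1),
        (S ^ (i * q)).mulVec
          (((1 - S) * aeval (S ^ p) (cyclotomic q ℚ)).mulVec (Pi.single 0 1)) := by
  haveI : Fact q.Prime := ⟨hq⟩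
  have hndvd : ¬ p ∣ q := fun h => absurd ((Nat.prime_dvd_prime_iff_eq hp hq).mp h) hlt.ne
  have hsummand : ∀ (i : ℕ) (g : ℚ[X]),
      (S ^ (i * q)).mulVec ((aeval S g).mulVec (Pi.single 0 1))
        = (aeval S (X ^ (i * q) * g)).mulVec (Pi.single 0 1) := by
    intro i g
    rw [map_mul, aeval_X_pow, Matrix.mulVec_mulVec]
  have hfactor : (1 - S) * aeval (S ^ p) (cyclotomic q ℚ)
      = aeval S ((1 - X) * expand ℚ p (cyclotomic q ℚ)) := by
    rw [map_mul, map_sub, map_one, aeval_X, expand_aeval]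
  have hpoly : ∑ i ∈ Finset.range (p-1), X ^ (i*q) * ((1 - X) * expand ℚ p (cyclotomic q ℚ))
      = cyclotomic (p*q) ℚ - X ^ ((p-1)*q) * cyclotomic (p*q) ℚ := by
    have h1 : expand ℚ p (cyclotomic q ℚ) = cyclotomic (q*p) ℚ * cyclotomic q ℚ :=
      cyclotomic_expand_eq_cyclotomic_mul hp hndvd ℚ
    have h2 : (1 - X) * cyclotomic q ℚ = 1 - X ^ q := by
      have h := geom_sum_mul (X : ℚ[X]) q
      rw [cyclotomic_prime ℚ q]
      linear_combination -h
    have h3 : (∑ i ∈ Finset.range (p-1), ((X:ℚ[X])^q) ^ i) * (X^q - 1)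
        = ((X:ℚ[X])^q)^(p-1) - 1 := geom_sum_mul _ _
    rw [h1, mul_comm q p]
    have hs : ∀ i ∈ Finset.range (p-1), (X:ℚ[X]) ^ (i*q) * ((1 - X) * (cyclotomic (p*q) ℚ * cyclotomic q ℚ))
        = ((X:ℚ[X])^q)^i * ((1 - X) * (cyclotomic (p*q) ℚ * cyclotomic q ℚ)) := by
      intro i _
      rw [← pow_mul, mul_comm q i]
    rw [Finset.sum_congr rfl hs, ← Finset.sum_mul]
    have hxp : (X:ℚ[X]) ^ ((p-1)*q) = ((X:ℚ[X])^q)^(p-1) := by rw [← pow_mul, mul_comm]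
    rw [hxp]
    linear_combination (∑ i ∈ Finset.range (p-1), ((X:ℚ[X])^q) ^ i) * (cyclotomic (p*q) ℚ) * h2
      - (cyclotomic (p*q) ℚ) * h3
  calc (fun j : Fin ((p - 1) * (q - 1) + 1) => (cyclotomic (p * q) ℚ).coeff (j : ℕ))
      = fun j : Fin ((p - 1) * (q - 1) + 1) =>
          (∑ i ∈ Finset.range (p-1), X ^ (i*q) * ((1 - X) * expand ℚ p (cyclotomic q ℚ))).coeff (j : ℕ) := by
        funext j
        rw [hpoly, coeff_sub]
        have hj : (j : ℕ) < (p-1)*q := by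
          have hj1 : (j : ℕ) < (p-1)*(q-1)+1 := j.isLt
          have hq1 : q - 1 + 1 = q := by omega
          have he : (p-1)*q = (p-1)*(q-1) + (p-1) := by nth_rewrite 1 [← hq1]; rw [Nat.mul_succ]
          omega
        rw [mul_comm ((X:ℚ[X]) ^ ((p-1)*q)), coeff_mul_X_pow', if_neg (by omega)]
        ring
    _ = ∑ i ∈ Finset.range (p-1),
          (aeval S (X ^ (i*q) * ((1 - X) * expand ℚ p (cyclotomic q ℚ)))).mulVec (Pi.single 0 1) := by
        funext j
        rw [Finset.sum_apply, finset_sum_coeff]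
        exact Finset.sum_congr rfl fun i _ =>
          (congrFun (aux_mulVec_single S hS _) j).symm
    _ = _ := by
        refine Finset.sum_congr rfl fun i _ => ?_
        rw [hfactor, hsummand]
end

section
/- Let p be prime, r coprime to p with 0 < r < p, and define words d_k ∈ {-1,0,1}^p by d_{k,j} = 1 if j + kr ≡ 0 (mod p), d_{k,j} = -1 if j + kr ≡ 1 (mod p), and 0 otherwise. Then for every i with 1 ≤ i ≤ p-2, the partial sums ω_i = d_0 + d_1 + ... + d_i have all coordinates in {-1, 0, 1}. -/
theorem partial_sums_in_alphabet (p r : ℕ) (hp : p.Prime) (hr : 0 < r) (hrp : r < p)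
    (hcop : Nat.Coprime r p)
    (d : ℕ → Fin p → ℤ)
    (hd : ∀ k : ℕ, ∀ j : Fin p,
      d k j = if ((j : ℕ) + k * r) % p = 0 then 1
              else if ((j : ℕ) + k * r) % p = 1 then -1 else 0) :
    ∀ i : ℕ, 1 ≤ i → i ≤ p - 2 →
      ∀ j : Fin p, (∑ k ∈ Finset.range (i + 1), d k j) ∈ ({-1, 0, 1} : Set ℤ) := by
  intro i hi1 hi2 j
  have hp2 := hp.two_le
  have hip : i + 1 < p := by omega
  -- injectivity modulo p
  have hinj : ∀ c : ℕ, ∀ k1 ∈ Finset.range (i + 1), ∀ k2 ∈ Finset.range (i + 1),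
      ((j : ℕ) + k1 * r) % p = c → ((j : ℕ) + k2 * r) % p = c → k1 = k2 := by
    intro c k1 hk1 k2 hk2 h1 h2
    simp only [Finset.mem_range] at hk1 hk2
    have hmod : ((j : ℕ) + k1 * r) % p = ((j : ℕ) + k2 * r) % p := by rw [h1, h2]
    have h3 : k1 * r ≡ k2 * r [MOD p] := (Nat.ModEq.add_left_cancel' _ hmod)
    have h4 : k1 ≡ k2 [MOD p] := h3.cancel_right_of_coprime (by
      simpa [Nat.coprime_comm] using hcop)
    have := h4
    unfold Nat.ModEq at this
    rw [Nat.mod_eq_of_lt (by omega), Nat.mod_eq_of_lt (by omega)] at this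
    exact this
  have hcard : ∀ c : ℕ,
      ((Finset.range (i + 1)).filter (fun k => ((j : ℕ) + k * r) % p = c)).card ≤ 1 := by
    intro c
    apply Finset.card_le_one.mpr
    intro a ha b hb
    simp only [Finset.mem_filter] at ha hb
    exact hinj c a ha.1 b hb.1 ha.2 hb.2
  have hsum : (∑ k ∈ Finset.range (i + 1), d k j) =
      (((Finset.range (i + 1)).filter (fun k => ((j : ℕ) + k * r) % p = 0)).card : ℤ)
      - (((Finset.range (i + 1)).filter (fun k => ((j : ℕ) + k * r) % p = 1)).card : ℤ) := by
    rw [sub_eq_add_neg]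
    rw [← Finset.sum_filter_add_sum_filter_not (Finset.range (i + 1))
      (fun k => ((j : ℕ) + k * r) % p = 0) (fun k => d k j)]
    congr 1
    · rw [Finset.card_eq_sum_ones, Nat.cast_sum]
      apply Finset.sum_congr rfl
      intro k hk
      simp only [Finset.mem_filter] at hk
      rw [hd k j, if_pos hk.2]
      simp
    · have : ((Finset.range (i + 1)).filter (fun k => ((j : ℕ) + k * r) % p = 1)) =
        (((Finset.range (i + 1)).filter (fun k => ¬((j : ℕ) + k * r) % p = 0)).filter
          (fun k => ((j : ℕ) + k * r) % p = 1)) := by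
        ext k
        simp only [Finset.mem_filter]
        constructor
        · rintro ⟨h1, h2⟩; exact ⟨⟨h1, by omega⟩, h2⟩
        · rintro ⟨⟨h1, _⟩, h2⟩; exact ⟨h1, h2⟩
      rw [this]
      rw [← Finset.sum_filter_add_sum_filter_not
        ((Finset.range (i + 1)).filter (fun k => ¬((j : ℕ) + k * r) % p = 0))
        (fun k => ((j : ℕ) + k * r) % p = 1) (fun k => d k j)]
      rw [Finset.card_eq_sum_ones, Nat.cast_sum]
      have h2 : ∀ k ∈ ((Finset.range (i + 1)).filter
          (fun k => ¬((j : ℕ) + k * r) % p = 0)).filter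
          (fun k => ¬((j : ℕ) + k * r) % p = 1), d k j = 0 := by
        intro k hk
        simp only [Finset.mem_filter] at hk
        rw [hd k j, if_neg hk.1.2, if_neg hk.2]
      rw [Finset.sum_eq_zero h2, add_zero]
      rw [← Finset.sum_neg_distrib]
      apply Finset.sum_congr rfl
      intro k hk
      simp only [Finset.mem_filter] at hk
      rw [hd k j, if_neg hk.1.2, if_pos hk.2]
      simp
  rw [hsum]
  have h0 := hcard 0
  have h1 := hcard 1
  set a := ((Finset.range (i + 1)).filter (fun k => ((j : ℕ) + k * r) % p = 0)).card
  set b := ((Finset.range (i + 1)).filter (fun k => ((j : ℕ) + k * r) % p = 1)).card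
  interval_cases a <;> interval_cases b <;> simp
end

section
/- Let p be prime, r coprime to p with 0 < r < p, and d_k as above. For each i ∈ [1, p-2], there is no index j ∈ [0, p-1] such that both the j-th coordinate of ω_{i-1} = d_0 + ... + d_{i-1} and the j-th coordinate of d_i equal 1, nor any j such that both equal -1. -/
lemma key_ne (p r : ℕ) (hcop : Nat.Coprime r p) (i k j : ℕ) (hk : k < i) (hi : i < p) :
    (j + k * r) % p ≠ (j + i * r) % p := by
  intro h
  have h1 : j + k * r ≡ j + i * r [MOD p] := h
  have h2 : k * r ≡ i * r [MOD p] := Nat.ModEq.add_left_cancel' j h1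
  have h3 : k ≡ i [MOD p] := h2.cancel_right_of_coprime hcop.symm
  have h4 : k % p = i % p := h3
  rw [Nat.mod_eq_of_lt (lt_trans hk hi), Nat.mod_eq_of_lt hi] at h4
  omega

theorem no_common_nonzero_coordinate (p r : ℕ) (hp : p.Prime) (hr : 0 < r) (hrp : r < p)
    (hcop : Nat.Coprime r p)
    (d : ℕ → Fin p → ℤ)
    (hd : ∀ k : ℕ, ∀ j : Fin p,
      d k j = if ((j : ℕ) + k * r) % p = 0 then 1
              else if ((j : ℕ) + k * r) % p = 1 then -1 else 0) :
    ∀ i : ℕ, 1 ≤ i → i ≤ p - 2 →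
      ∀ j : Fin p,
        ¬((∑ k ∈ Finset.range i, d k j) = 1 ∧ d i j = 1) ∧
        ¬((∑ k ∈ Finset.range i, d k j) = -1 ∧ d i j = -1) := by
  intro i hi1 hi2 j
  have hp2 := hp.two_le
  have hip : i < p := by omega
  constructor
  · rintro ⟨hsum, hdi⟩
    -- d i j = 1 means (j + i*r) % p = 0
    have h0 : ((j : ℕ) + i * r) % p = 0 := by
      rw [hd i j] at hdi
      by_contra hc
      rw [if_neg hc] at hdi
      split at hdi <;> omega
    have hle : ∀ k ∈ Finset.range i, d k j ≤ 0 := by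
      intro k hk
      rw [Finset.mem_range] at hk
      have hne : ((j : ℕ) + k * r) % p ≠ 0 := by
        rw [← h0]; exact key_ne p r hcop i k j hk hip
      rw [hd k j, if_neg hne]
      split <;> omega
    have : (∑ k ∈ Finset.range i, d k j) ≤ 0 := Finset.sum_nonpos hle
    omega
  · rintro ⟨hsum, hdi⟩
    have h1 : ((j : ℕ) + i * r) % p = 1 := by
      rw [hd i j] at hdi
      split at hdi
      · omega
      · by_contra hc
        rw [if_neg hc] at hdi
        omega
    have hge : ∀ k ∈ Finset.range i, 0 ≤ d k j := by
      intro k hk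
      rw [Finset.mem_range] at hk
      have hne : ((j : ℕ) + k * r) % p ≠ 1 := by
        rw [← h1]; exact key_ne p r hcop i k j hk hip
      rw [hd k j]
      simp only [hne, if_false]
      split <;> omega
    have : 0 ≤ (∑ k ∈ Finset.range i, d k j) := Finset.sum_nonneg hge
    omega
end

section
/- Let p < q be primes with p > 2, m = (p-1)(q-1), d_0 ∈ {-1,0,1}^p the word 1(-1)0...0, and d_i = σ^{iq}(d_0) the left cyclic shift of d_0 by iq positions. Then d_0^{(m+1)/p} = d_0^{q/p} · d_1^{q/p} · ... · d_{p-3}^{q/p} · d_{p-2}^{(q-p+2)/p}. -/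
/-- The fractional power `v^{k/p}`: the prefix of length `k` of the infinite
periodic repetition of the length-`p` word `v`. -/
def fracPow {α : Type*} {p : ℕ} (hp : 0 < p) (v : Fin p → α) (k : ℕ) : List α :=
  List.ofFn (fun j : Fin k => v ⟨(j : ℕ) % p, Nat.mod_lt _ hp⟩)

lemma fracPow_add {α : Type*} {p : ℕ} (hp : 0 < p) (v : Fin p → α) (a b : ℕ) :
    fracPow hp v (a + b) =
      fracPow hp v a ++ List.ofFn (fun j : Fin b => v ⟨(a + (j : ℕ)) % p, Nat.mod_lt _ hp⟩) := by
  unfold fracPow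
  rw [List.ofFn_add]
  congr 1

lemma flatten_blocks {p q : ℕ} (hp0 : 0 < p) (d : ℕ → Fin p → ℤ)
    (hd : ∀ i : ℕ, ∀ j : Fin p, d i j = d 0 ⟨((j : ℕ) + i * q) % p, Nat.mod_lt _ hp0⟩) :
    ∀ n : ℕ, (List.ofFn (fun i : Fin n => fracPow hp0 (d (i : ℕ)) q)).flatten =
      fracPow hp0 (d 0) (n * q) := by
  intro n
  induction n with
  | zero => simp [fracPow]
  | succ n ih =>
    rw [List.ofFn_succ', List.concat_eq_append, List.flatten_append]
    simp only [List.flatten_cons, List.flatten_nil, List.append_nil, Fin.coe_castSucc,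
      Fin.val_last]
    rw [ih, Nat.succ_mul, fracPow_add]
    congr 1
    unfold fracPow
    refine congrArg List.ofFn ?_
    funext j
    rw [hd n]
    congr 1
    ext
    simp [Nat.mod_add_mod, Nat.add_comm]

theorem fracPow_d0_decomposition (p q : ℕ) (hp : p.Prime) (hq : q.Prime)
    (hlt : p < q) (hp2 : 2 < p) (hp0 : 0 < p)
    (d : ℕ → Fin p → ℤ)
    (hd0 : ∀ j : Fin p, d 0 j = if (j : ℕ) = 0 then 1 else if (j : ℕ) = 1 then -1 else 0)
    (hd : ∀ i : ℕ, ∀ j : Fin p, d i j = d 0 ⟨((j : ℕ) + i * q) % p, Nat.mod_lt _ hp0⟩) :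
    fracPow hp0 (d 0) ((p - 1) * (q - 1) + 1) =
      (List.ofFn (fun i : Fin (p - 2) => fracPow hp0 (d (i : ℕ)) q)).flatten ++
        fracPow hp0 (d (p - 2)) (q - p + 2) := by
  obtain ⟨a, ha⟩ : ∃ a, p = a + 3 := ⟨p - 3, by omega⟩
  obtain ⟨b, hb⟩ : ∃ b, q = a + b + 4 := ⟨q - p - 1, by omega⟩
  have hlen : (p - 1) * (q - 1) + 1 = (p - 2) * q + (q - p + 2) := by
    subst ha hb
    have h1 : a + 3 - 1 = a + 2 := by omega
    have h2 : a + b + 4 - 1 = a + b + 3 := by omega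
    have h3 : a + 3 - 2 = a + 1 := by omega
    have h4 : a + b + 4 - (a + 3) + 2 = b + 3 := by omega
    rw [h1, h2, h3, h4]
    ring
  rw [hlen, fracPow_add, flatten_blocks hp0 d hd]
  congr 1
  unfold fracPow
  refine congrArg List.ofFn ?_
  funext j
  rw [hd (p - 2)]
  congr 1
  ext
  simp [Nat.mod_add_mod, Nat.add_comm]
end

section
/- Let p < q be primes with p > 2, m = (p-1)(q-1), and for 0 ≤ i ≤ p-2 define ω_i = d_0 + ... + d_i where d_k is the left cyclic shift by kq of the word d_0 = 1(-1)0...0 of length p. Then the coefficient word of Φ_{pq} (reading coefficient of x^j at position j, 0 ≤ j ≤ m) equals the concatenation ω_0^{q/p} · ω_1^{q/p} · ... · ω_{p-3}^{q/p} · ω_{p-2}^{(q-p+2)/p}. -/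
open Polynomial

open Finset

lemma fracPow_eq_map {α : Type*} {p : ℕ} (hp : 0 < p) (v : Fin p → α) (k : ℕ) :
    fracPow hp v k = (List.range k).map (fun j => v ⟨j % p, Nat.mod_lt _ hp⟩) := by
  unfold fracPow
  apply List.ext_getElem
  · simp
  · intro i h1 h2
    simp

lemma Xpow_sub_one_ne (n : ℕ) (hn : 0 < n) : (X^n - 1 : ℤ[X]) ≠ 0 := by
  intro h
  have := congrArg (fun r => Polynomial.coeff r 0) h
  simp only [coeff_sub, coeff_X_pow, coeff_one, coeff_zero] at this
  rw [if_neg hn.ne] at this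
  norm_num at this

lemma divisors_pq (p q : ℕ) (hp : p.Prime) (hq : q.Prime) (hne : p ≠ q) :
    (p*q).divisors = {1, p, q, p*q} := by
  ext d
  simp only [Nat.mem_divisors, Finset.mem_insert, Finset.mem_singleton]
  constructor
  · rintro ⟨hd, -⟩
    obtain ⟨a, b, ha, hb, rfl⟩ := Nat.dvd_mul.mp hd
    rcases (Nat.dvd_prime hp).mp ha with rfl | rfl <;>
      rcases (Nat.dvd_prime hq).mp hb with rfl | rfl <;> simp
  · have : p*q ≠ 0 := Nat.mul_ne_zero hp.pos.ne' hq.pos.ne'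
    rintro (rfl | rfl | rfl | rfl) <;>
      exact ⟨by first | exact one_dvd _ | exact dvd_mul_right _ _ | exact dvd_mul_left _ _ | rfl, this⟩

lemma key_identity (p q : ℕ) (hp : p.Prime) (hq : q.Prime) (hne : p ≠ q) :
    cyclotomic (p*q) ℤ * (X^(p*q) - 1) =
      (X - 1) * ((∑ a ∈ range q, X^(p*a)) * (∑ b ∈ range p, X^(q*b))) := by
  have hp0 := hp.pos
  have hq0 := hq.pos
  have hpq0 : 0 < p*q := Nat.mul_pos hp0 hq0
  have h1 : cyclotomic 1 ℤ * cyclotomic p ℤ = X^p - 1 := by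
    have := prod_cyclotomic_eq_X_pow_sub_one hp0 ℤ
    rwa [hp.divisors, Finset.prod_insert (by simp [hp.one_lt.ne]), Finset.prod_singleton] at this
  have h2 : cyclotomic 1 ℤ * cyclotomic q ℤ = X^q - 1 := by
    have := prod_cyclotomic_eq_X_pow_sub_one hq0 ℤ
    rwa [hq.divisors, Finset.prod_insert (by simp [hq.one_lt.ne]), Finset.prod_singleton] at this
  have h3 : cyclotomic 1 ℤ * cyclotomic p ℤ * cyclotomic q ℤ * cyclotomic (p*q) ℤ = X^(p*q) - 1 := by
    have := prod_cyclotomic_eq_X_pow_sub_one hpq0 ℤ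
    rw [divisors_pq p q hp hq hne] at this
    have e1 : (1:ℕ) ≠ p := hp.one_lt.ne
    have e2 : (1:ℕ) ≠ q := hq.one_lt.ne
    have e3 : (1:ℕ) ≠ p*q := by nlinarith [hp.one_lt, hq.one_lt]
    have e4 : p ≠ p*q := by nlinarith [hp.pos, hq.one_lt]
    have e5 : q ≠ p*q := by nlinarith [hq.pos, hp.one_lt]
    rw [Finset.prod_insert (by simp [e1, e2, e3]), Finset.prod_insert (by simp [hne, e4]),
      Finset.prod_insert (by simp [e5]), Finset.prod_singleton] at this
    linear_combination this
  have gp : (∑ a ∈ range q, X^(p*a) : ℤ[X]) * (X^p - 1) = X^(p*q) - 1 := by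
    have := geom_sum_mul (X^p : ℤ[X]) q
    simpa [← pow_mul, mul_comm] using this
  have gq : (∑ b ∈ range p, X^(q*b) : ℤ[X]) * (X^q - 1) = X^(p*q) - 1 := by
    have := geom_sum_mul (X^q : ℤ[X]) p
    simpa [← pow_mul, mul_comm] using this
  have step : cyclotomic (p*q) ℤ * ((X^p - 1) * (X^q - 1)) = (X^(p*q) - 1) * (X - 1) := by
    rw [← h3, ← h1, ← h2, ← cyclotomic_one ℤ]; ring
  have hnz : ((X^p - 1) * (X^q - 1) : ℤ[X]) ≠ 0 :=
    mul_ne_zero (Xpow_sub_one_ne p hp0) (Xpow_sub_one_ne q hq0)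
  apply mul_right_cancel₀ hnz
  calc cyclotomic (p*q) ℤ * (X^(p*q) - 1) * ((X^p - 1) * (X^q - 1))
      = (cyclotomic (p*q) ℤ * ((X^p - 1) * (X^q - 1))) * (X^(p*q) - 1) := by ring
    _ = ((X^(p*q) - 1) * (X - 1)) * (X^(p*q) - 1) := by rw [step]
    _ = (X - 1) * (((∑ a ∈ range q, X^(p*a)) * (X^p - 1)) * ((∑ b ∈ range p, X^(q*b)) * (X^q - 1))) := by
        rw [gp, gq]; ring
    _ = (X - 1) * ((∑ a ∈ range q, X^(p*a)) * (∑ b ∈ range p, X^(q*b))) * ((X^p - 1) * (X^q - 1)) := by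
        ring

lemma coeff_SpSq (p q n : ℕ) :
    ((∑ a ∈ range q, (X:ℤ[X])^(p*a)) * (∑ b ∈ range p, X^(q*b))).coeff n
      = ∑ a ∈ range q, ∑ b ∈ range p, (if p*a + q*b = n then (1:ℤ) else 0) := by
  rw [Finset.sum_mul_sum]
  simp_rw [← pow_add, finset_sum_coeff, coeff_X_pow]
  exact Finset.sum_congr rfl fun a _ => Finset.sum_congr rfl fun b _ => by
    simp [eq_comm]

lemma bounds_aux (p q n : ℕ) (hp2 : 2 < p) (hq2 : 1 < q)
    (hn : n ≤ (p-1)*(q-1)) : n / q ≤ p - 2 ∧ n < p * q := by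
  have hq0 : 0 < q := by omega
  have h1 : (p-1)*(q-1) < (p-1)*q :=
    Nat.mul_lt_mul_of_pos_left (by omega) (by omega)
  have h2 : n < (p-1)*q := lt_of_le_of_lt hn h1
  have h3 : n / q < p - 1 := (Nat.div_lt_iff_lt_mul hq0).mpr h2
  have h4 : (p-1)*q ≤ p*q := Nat.mul_le_mul_right _ (by omega)
  exact ⟨by omega, by omega⟩

lemma card_count (p q n : ℕ) (hp2 : 2 < p) (hq2 : 1 < q)
    (hn : n ≤ (p-1)*(q-1)) :
    (∑ a ∈ range q, ∑ b ∈ range p, (if p*a + q*b = n then (1:ℤ) else 0))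
      = ((range (n/q + 1)).filter (fun b => p ∣ (n - q*b))).card := by
  have hp0 : 0 < p := by omega
  have hq0 : 0 < q := by omega
  obtain ⟨hdivb, hmlt⟩ := bounds_aux p q n hp2 hq2 hn
  rw [← Finset.sum_product', Finset.sum_boole]
  norm_cast
  apply Finset.card_bij' (fun ab _ => ab.2) (fun b _ => ((n - q*b)/p, b))
  · rintro ⟨a, b⟩ hab
    simp only [Finset.mem_filter, Finset.mem_product, Finset.mem_range] at hab ⊢
    obtain ⟨⟨ha, hb⟩, heq⟩ := hab
    have hcomm : q*b = b*q := Nat.mul_comm q b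
    have hble : b ≤ n / q := (Nat.le_div_iff_mul_le hq0).mpr (by omega)
    exact ⟨by omega, a, by omega⟩
  · intro b hb
    simp only [Finset.mem_filter, Finset.mem_range] at hb
    simp only [Finset.mem_filter, Finset.mem_product, Finset.mem_range]
    obtain ⟨hbr, hdvd⟩ := hb
    have hble : b ≤ n/q := by omega
    have hcomm : q*b = b*q := Nat.mul_comm q b
    have hqb : b * q ≤ n := (Nat.le_div_iff_mul_le hq0).mp hble
    obtain ⟨c, hc⟩ := hdvd
    have hcan : (n - q*b)/p = c := by rw [hc]; exact Nat.mul_div_cancel_left c hp0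
    have hcq : c < q := by
      by_contra hcon
      push_neg at hcon
      have : p * q ≤ p * c := Nat.mul_le_mul_left _ hcon
      omega
    refine ⟨⟨?_, ?_⟩, ?_⟩
    · rw [hcan]; exact hcq
    · omega
    · rw [hcan]; omega
  · rintro ⟨a, b⟩ hab
    simp only [Finset.mem_filter, Finset.mem_product, Finset.mem_range] at hab
    obtain ⟨⟨ha, hb⟩, heq⟩ := hab
    have h : n - q*b = p*a := by omega
    simp only [h, Nat.mul_div_cancel_left a hp0]
  · intro b hb; rfl

lemma word_sum (p q n : ℕ) (hp2 : 2 < p) (hq0 : 0 < q) :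
    (∑ k ∈ range (n/q + 1), (if (n % q % p + k*q) % p = 0 then (1:ℤ)
        else if (n % q % p + k*q) % p = 1 then -1 else 0))
      = (((range (n/q + 1)).filter (fun k => p ∣ (n - q*k))).card : ℤ)
        - (((range (n/q + 1)).filter (fun k => q*k + 1 ≤ n ∧ (n - q*k) % p = 1)).card : ℤ) := by
  have hmod : ∀ j ≤ n/q, (n % q % p + (n/q - j)*q) % p = (n - q*j) % p := by
    intro j hj
    have h1 : q*(n/q - j) + q*j = q*(n/q) := by
      rw [← Nat.mul_add]; congr 1; omega
    have h2 : q*(n/q) + n % q = n := Nat.div_add_mod n q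
    have h3 : n - q*j = n % q + q*(n/q - j) := by omega
    rw [Nat.mod_add_mod, mul_comm (n/q - j) q, ← h3]
  calc (∑ k ∈ range (n/q + 1), (if (n % q % p + k*q) % p = 0 then (1:ℤ)
        else if (n % q % p + k*q) % p = 1 then -1 else 0))
      = ∑ j ∈ range (n/q + 1), (if (n % q % p + (n/q + 1 - 1 - j)*q) % p = 0 then (1:ℤ)
        else if (n % q % p + (n/q + 1 - 1 - j)*q) % p = 1 then -1 else 0) :=
        (Finset.sum_range_reflect _ _).symm
    _ = ∑ j ∈ range (n/q + 1), ((if (n - q*j) % p = 0 then (1:ℤ) else 0)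
          - (if (n - q*j) % p = 1 then 1 else 0)) := by
        refine Finset.sum_congr rfl fun j hj => ?_
        rw [Finset.mem_range] at hj
        have hj' : j ≤ n/q := by omega
        rw [show n/q + 1 - 1 - j = n/q - j from by omega, hmod j hj']
        split_ifs <;> omega
    _ = (((range (n/q + 1)).filter (fun k => (n - q*k) % p = 0)).card : ℤ)
        - (((range (n/q + 1)).filter (fun k => (n - q*k) % p = 1)).card : ℤ) := by
        rw [Finset.sum_sub_distrib, Finset.sum_boole, Finset.sum_boole]
    _ = (((range (n/q + 1)).filter (fun k => p ∣ (n - q*k))).card : ℤ)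
        - (((range (n/q + 1)).filter (fun k => q*k + 1 ≤ n ∧ (n - q*k) % p = 1)).card : ℤ) := by
        congr 2
        · exact congrArg Finset.card <| Finset.filter_congr fun k _ =>
            (Nat.dvd_iff_mod_eq_zero).symm
        · refine congrArg Finset.card <| Finset.filter_congr fun k hk => ?_
          rw [Finset.mem_range] at hk
          have hqk : q*k ≤ n := by
            have h' : k * q ≤ n := (Nat.le_div_iff_mul_le hq0).mp (by omega)
            have := Nat.mul_comm q k
            omega
          constructor
          · intro h1
            refine ⟨?_, h1⟩
            rcases Nat.eq_or_lt_of_le hqk with he | hlt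
            · exfalso
              rw [show n - q*k = 0 from by omega, Nat.zero_mod] at h1
              omega
            · omega
          · exact fun h => h.2

lemma ofFn_coe {α : Type*} (k : ℕ) (g : ℕ → α) :
    List.ofFn (fun j : Fin k => g (j : ℕ)) = (List.range k).map g := by
  apply List.ext_getElem
  · simp
  · intro i h1 h2
    simp

lemma blocks_flatten {α : Type*} (q : ℕ) (F : ℕ → α) :
    ∀ t : ℕ, (List.range (t*q)).map F
      = ((List.range t).map (fun i => (List.range q).map (fun j => F (i*q + j)))).flatten
  | 0 => by simp
  | (t+1) => by
    rw [show (t+1)*q = t*q + q from by ring, List.range_add, List.map_append,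
      List.range_succ, List.map_append, List.flatten_append, ← blocks_flatten q F t]
    simp [List.map_map, Function.comp]

lemma shift_card (p q n : ℕ) (hp2 : 2 < p) (hq0 : 0 < q) (hn1 : 1 ≤ n) :
    ((range ((n-1)/q + 1)).filter (fun b => p ∣ (n-1 - q*b))).card
      = ((range (n/q + 1)).filter (fun b => q*b + 1 ≤ n ∧ (n - q*b) % p = 1)).card := by
  congr 1
  ext b
  simp only [Finset.mem_filter, Finset.mem_range]
  constructor
  · rintro ⟨hbr, c, hc⟩
    have hble : b ≤ (n-1)/q := by omega
    have hqb : b * q ≤ n - 1 := (Nat.le_div_iff_mul_le hq0).mp hble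
    have hcm := Nat.mul_comm q b
    have hble2 : b ≤ n/q := le_trans hble (Nat.div_le_div_right (by omega))
    have h1 : n - q*b = p*c + 1 := by omega
    refine ⟨by omega, by omega, ?_⟩
    rw [h1, Nat.mul_add_mod]
    exact Nat.mod_eq_of_lt (by omega)
  · rintro ⟨hbr, hle, hmod⟩
    have hcm := Nat.mul_comm q b
    have hble : b ≤ (n-1)/q := (Nat.le_div_iff_mul_le hq0).mpr (by omega)
    have hdm := Nat.div_add_mod (n - q*b) p
    refine ⟨by omega, (n - q*b)/p, by omega⟩

lemma coeff_main (p q n : ℕ) (hp : p.Prime) (hq : q.Prime) (hlt : p < q) (hp2 : 2 < p)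
    (hn : n ≤ (p-1)*(q-1)) :
    (cyclotomic (p*q) ℤ).coeff n
      = (((range (n/q + 1)).filter (fun k => p ∣ (n - q*k))).card : ℤ)
        - (((range (n/q + 1)).filter (fun k => q*k + 1 ≤ n ∧ (n - q*k) % p = 1)).card : ℤ) := by
  have hq2 : 1 < q := hq.one_lt
  have hq0 : 0 < q := by omega
  obtain ⟨-, hmlt⟩ := bounds_aux p q n hp2 hq2 hn
  have hk := congrArg (fun f => f.coeff n) (key_identity p q hp hq (by omega))
  simp only [mul_sub, mul_one, sub_mul, one_mul, coeff_sub] at hk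
  rw [coeff_mul_X_pow' (cyclotomic (p*q) ℤ) (p*q) n, if_neg (by omega)] at hk
  have hXT : ((X : ℤ[X]) * ((∑ a ∈ range q, (X:ℤ[X])^(p*a)) * (∑ b ∈ range p, X^(q*b)))).coeff n
      = if 1 ≤ n then ((∑ a ∈ range q, (X:ℤ[X])^(p*a)) * (∑ b ∈ range p, X^(q*b))).coeff (n-1)
        else 0 := by
    rcases n with _ | n'
    · simp [mul_coeff_zero, coeff_X_zero]
    · rw [coeff_X_mul, if_pos (by omega)]
      norm_num
  rw [hXT] at hk
  have hTn : ((∑ a ∈ range q, (X:ℤ[X])^(p*a)) * (∑ b ∈ range p, X^(q*b))).coeff n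
      = (((range (n/q + 1)).filter (fun k => p ∣ (n - q*k))).card : ℤ) := by
    rw [coeff_SpSq, card_count p q n hp2 hq2 hn]
  by_cases h1 : 1 ≤ n
  · rw [if_pos h1] at hk
    have hTn1 : ((∑ a ∈ range q, (X:ℤ[X])^(p*a)) * (∑ b ∈ range p, X^(q*b))).coeff (n-1)
        = (((range (n/q + 1)).filter (fun k => q*k + 1 ≤ n ∧ (n - q*k) % p = 1)).card : ℤ) := by
      rw [coeff_SpSq, card_count p q (n-1) hp2 hq2 (by omega)]
      exact_mod_cast congrArg (Nat.cast (R := ℤ)) (shift_card p q n hp2 hq0 h1)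
    rw [hTn, hTn1] at hk
    linarith [hk]
  · rw [if_neg h1] at hk
    have hn0 : n = 0 := by omega
    have hempty : ((range (n/q + 1)).filter (fun k => q*k + 1 ≤ n ∧ (n - q*k) % p = 1)) = ∅ := by
      apply Finset.filter_false_of_mem
      intro k _
      rintro ⟨hc, -⟩
      omega
    rw [hTn] at hk
    rw [hempty]
    simp only [Finset.card_empty, Nat.cast_zero, sub_zero]
    linarith [hk]

theorem cyclotomic_word_decomposition (p q : ℕ) (hp : p.Prime) (hq : q.Prime)
    (hlt : p < q) (hp2 : 2 < p) (hp0 : 0 < p)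
    (d : ℕ → Fin p → ℤ) (ω : ℕ → Fin p → ℤ)
    (hd0 : ∀ j : Fin p, d 0 j = if (j : ℕ) = 0 then 1 else if (j : ℕ) = 1 then -1 else 0)
    (hd : ∀ i : ℕ, ∀ j : Fin p, d i j = d 0 ⟨((j : ℕ) + i * q) % p, Nat.mod_lt _ hp0⟩)
    (hω : ∀ i : ℕ, ∀ j : Fin p, ω i j = ∑ k ∈ Finset.range (i + 1), d k j) :
    List.ofFn (fun j : Fin ((p - 1) * (q - 1) + 1) => (cyclotomic (p * q) ℤ).coeff (j : ℕ)) =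
      (List.ofFn (fun i : Fin (p - 2) => fracPow hp0 (ω (i : ℕ)) q)).flatten ++
        fracPow hp0 (ω (p - 2)) (q - p + 2) := by
  have hq0 : 0 < q := hq.pos
  have hq2 : 1 < q := hq.one_lt
  have hsplit : (p-1)*(q-1) + 1 = (p-2)*q + (q-p+2) := by
    zify [show 1 ≤ p from by omega, show 1 ≤ q from by omega,
      show 2 ≤ p from by omega, show p ≤ q from by omega]
    ring
  have E : ∀ n, n ≤ (p-1)*(q-1) →
      (cyclotomic (p*q) ℤ).coeff n = ω (n/q) ⟨n % q % p, Nat.mod_lt _ hp0⟩ := by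
    intro n hn
    rw [coeff_main p q n hp hq hlt hp2 hn, ← word_sum p q n hp2 hq0, hω]
    refine Finset.sum_congr rfl fun k _ => ?_
    rw [hd k, hd0]
  have entry_block : ∀ i ∈ List.range (p-2), ∀ j ∈ List.range q,
      (cyclotomic (p*q) ℤ).coeff (i*q + j) = ω i ⟨j % p, Nat.mod_lt _ hp0⟩ := by
    intro i hi j hj
    rw [List.mem_range] at hi hj
    have hn : i*q + j ≤ (p-1)*(q-1) := by
      have h1 : (i+1)*q ≤ (p-2)*q := Nat.mul_le_mul_right q (by omega)
      have h2 : (i+1)*q = i*q + q := by ring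
      omega
    have hdiv : (i*q + j)/q = i := by
      rw [Nat.add_comm]
      rw [Nat.add_mul_div_right j i hq0, Nat.div_eq_of_lt hj, Nat.zero_add]
    have hmod : (i*q + j) % q = j := by
      rw [Nat.add_comm, Nat.add_mul_mod_self_right]
      exact Nat.mod_eq_of_lt hj
    rw [E _ hn, hdiv, hmod]
  have entry_tail : ∀ j ∈ List.range (q-p+2),
      (cyclotomic (p*q) ℤ).coeff ((p-2)*q + j) = ω (p-2) ⟨j % p, Nat.mod_lt _ hp0⟩ := by
    intro j hj
    rw [List.mem_range] at hj
    have hjq : j < q := by omega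
    have hn : (p-2)*q + j ≤ (p-1)*(q-1) := by omega
    have hdiv : ((p-2)*q + j)/q = p-2 := by
      rw [Nat.add_comm]
      rw [Nat.add_mul_div_right j (p-2) hq0, Nat.div_eq_of_lt hjq, Nat.zero_add]
    have hmod : ((p-2)*q + j) % q = j := by
      rw [Nat.add_comm, Nat.add_mul_mod_self_right]
      exact Nat.mod_eq_of_lt hjq
    rw [E _ hn, hdiv, hmod]
  rw [ofFn_coe ((p - 1) * (q - 1) + 1) (fun n => (cyclotomic (p * q) ℤ).coeff n),
    ofFn_coe (p - 2) (fun i => fracPow hp0 (ω i) q)]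
  simp only [fracPow_eq_map]
  rw [hsplit, List.range_add, List.map_append, List.map_map]
  congr 1
  · rw [blocks_flatten q _ (p-2)]
    refine congrArg List.flatten (List.map_congr_left fun i hi => ?_)
    refine List.map_congr_left fun j hj => ?_
    exact entry_block i hi j hj
  · refine List.map_congr_left fun j hj => ?_
    simpa using entry_tail j hj
end

section
/- Let p and q be coprime integers with 2 < p < q. Then the semigroup polynomial satisfies F_{p,q}(x) = 1 + (x-1) · Σ_{s ∉ S(p,q)} x^s, where the sum ranges over the (finitely many) nonnegative integers not in the numerical semigroup S(p,q) = {ap + bq : a,b ∈ ℤ_{≥0}}. -/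
open Polynomial Classical in

theorem semigroup_polynomial_gaps (p q : ℕ) (hcop : Nat.Coprime p q)
    (hp : 2 < p) (hpq : p < q) (F : ℤ[X])
    (hF : ((X : ℤ[X]) ^ (p * q) - 1) * (X - 1) = F * ((X ^ p - 1) * (X ^ q - 1))) :
    (∀ s : ℕ, (¬ ∃ a b : ℕ, a * p + b * q = s) → s < p * q) ∧
      F = 1 + (X - 1) *
        ∑ s ∈ (Finset.range (p * q)).filter (fun s => ¬ ∃ a b : ℕ, a * p + b * q = s),
          (X : ℤ[X]) ^ s := by
  have hq0 : 0 < q := by omega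
  have hp0 : 0 < p := by omega
  haveI : NeZero q := ⟨by omega⟩
  -- every n ≥ p*q is representable
  have L1 : ∀ n : ℕ, p * q ≤ n → ∃ a b : ℕ, a * p + b * q = n := by
    intro n hn
    have hu : IsUnit (p : ZMod q) := (ZMod.isUnit_iff_coprime p q).mpr hcop
    set a : ℕ := ((n : ZMod q) * (p : ZMod q)⁻¹).val with ha
    have haq : a < q := ZMod.val_lt _
    have hap : ((a * p : ℕ) : ZMod q) = (n : ZMod q) := by
      push_cast
      rw [ha, ZMod.natCast_val, ZMod.cast_id, mul_assoc, ZMod.inv_mul_of_unit _ hu, mul_one]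
    have hle : a * p ≤ n := by
      have h1 : a * p ≤ (q - 1) * p := Nat.mul_le_mul_right _ (by omega)
      have h2 : (q - 1) * p = q * p - p := by rw [Nat.sub_mul, one_mul]
      have h3 : q * p = p * q := mul_comm q p
      omega
    have hdvd : q ∣ n - a * p := (Nat.modEq_iff_dvd' hle).mp
      ((ZMod.natCast_eq_natCast_iff _ _ _).mp hap)
    obtain ⟨b, hb⟩ := hdvd
    refine ⟨a, b, ?_⟩
    have : q * b = b * q := mul_comm q b
    omega
  have part1 : ∀ s : ℕ, (¬ ∃ a b : ℕ, a * p + b * q = s) → s < p * q := by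
    intro s hs; by_contra h; exact hs (L1 s (by omega))
  set T := (Finset.range (p * q)).filter (fun s => ¬ ∃ a b : ℕ, a * p + b * q = s) with hT
  have hmemT : ∀ n, n ∈ T ↔ ¬ ∃ a b : ℕ, a * p + b * q = n := by
    intro n
    rw [hT, Finset.mem_filter, Finset.mem_range]
    constructor
    · exact fun h => h.2
    · exact fun h => ⟨part1 n h, h⟩
  -- key set identity
  have hsets : Finset.range q ∪ T.image (· + q) = (Finset.range q).image (· * p) ∪ T := by
    ext n
    simp only [Finset.mem_union, Finset.mem_range, Finset.mem_image]
    by_cases hnq : n < q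
    · have hrhs : (∃ i, i < q ∧ i * p = n) ∨ n ∈ T := by
        by_cases hpn : p ∣ n
        · obtain ⟨c, rfl⟩ := hpn
          left
          refine ⟨c, ?_, mul_comm c p⟩
          have : c ≤ p * c := Nat.le_mul_of_pos_left c hp0
          omega
        · right
          rw [hmemT]
          rintro ⟨a, b, hab⟩
          rcases b with _ | b
          · exact hpn ⟨a, by rw [← hab]; ring⟩
          · have : (b + 1) * q = b * q + q := Nat.succ_mul b q
            omega
      constructor
      · intro _; exact hrhs
      · intro _; exact Or.inl hnq
    · constructor
      · rintro (h | ⟨s, hs, rfl⟩)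
        · omega
        · rw [hmemT] at hs
          by_cases hP : ∃ i, i < q ∧ i * p = s + q
          · exact Or.inl hP
          · right
            rw [hmemT]
            rintro ⟨a, b, hab⟩
            rcases b with _ | b
            · rcases Nat.lt_or_ge a q with h1 | h2
              · exact hP ⟨a, h1, by omega⟩
              · obtain ⟨c, rfl⟩ : ∃ c, a = c + q := ⟨a - q, by omega⟩
                refine hs ⟨c, p - 1, ?_⟩
                rw [add_mul] at hab
                zify [show 1 ≤ p by omega] at hab ⊢
                linear_combination hab
            · have hb : (b + 1) * q = b * q + q := Nat.succ_mul b q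
              exact hs ⟨a, b, by omega⟩
      · rintro (⟨i, hiq, rfl⟩ | hn)
        · rcases Nat.lt_or_ge (i * p) q with h1 | h2
          · exact Or.inl h1
          · right
            refine ⟨i * p - q, ?_, by omega⟩
            rw [hmemT]
            rintro ⟨a, b, hab⟩
            have hb1 : (b + 1) * q = b * q + q := Nat.succ_mul b q
            have hab' : a * p + (b + 1) * q = i * p := by omega
            have hai : a < i := by
              have hbq : 0 < (b + 1) * q := Nat.mul_pos (by omega) hq0
              have hlt : a * p < i * p := by omega
              exact Nat.lt_of_mul_lt_mul_right hlt
            have hmod : a * p ≡ i * p [MOD q] := by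
              refine (Nat.modEq_iff_dvd' (Nat.mul_le_mul_right p hai.le)).mpr ⟨b + 1, ?_⟩
              have : q * (b + 1) = (b + 1) * q := mul_comm q (b + 1)
              omega
            have hmod2 : a ≡ i [MOD q] := Nat.ModEq.cancel_right_of_coprime hcop.symm hmod
            have hd : q ∣ i - a := (Nat.modEq_iff_dvd' hai.le).mp hmod2
            have := Nat.le_of_dvd (by omega) hd
            omega
        · right
          refine ⟨n - q, ?_, by omega⟩
          rw [hmemT] at hn ⊢
          rintro ⟨a, b, hab⟩
          have hb1 : (b + 1) * q = b * q + q := Nat.succ_mul b q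
          exact hn ⟨a, b + 1, by omega⟩
  -- sum identity from the set identity
  have d1 : Disjoint (Finset.range q) (T.image (· + q)) := by
    rw [Finset.disjoint_left]
    intro n hn hn'
    obtain ⟨s, _, rfl⟩ := Finset.mem_image.mp hn'
    have := Finset.mem_range.mp hn
    omega
  have d2 : Disjoint ((Finset.range q).image (· * p)) T := by
    rw [Finset.disjoint_left]
    intro n hn hn'
    obtain ⟨i, _, rfl⟩ := Finset.mem_image.mp hn
    exact (hmemT _).mp hn' ⟨i, 0, by omega⟩
  have hsum : (∑ j ∈ Finset.range q, (X : ℤ[X]) ^ j) + ∑ s ∈ T, (X : ℤ[X]) ^ (s + q)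
      = (∑ i ∈ Finset.range q, (X : ℤ[X]) ^ (i * p)) + ∑ s ∈ T, (X : ℤ[X]) ^ s := by
    have h1 : ∑ n ∈ Finset.range q ∪ T.image (· + q), (X : ℤ[X]) ^ n
        = (∑ j ∈ Finset.range q, (X : ℤ[X]) ^ j) + ∑ s ∈ T, (X : ℤ[X]) ^ (s + q) := by
      rw [Finset.sum_union d1, Finset.sum_image (by intro a _ b _ h; exact Nat.add_right_cancel h)]
    have h2 : ∑ n ∈ (Finset.range q).image (· * p) ∪ T, (X : ℤ[X]) ^ n
        = (∑ i ∈ Finset.range q, (X : ℤ[X]) ^ (i * p)) + ∑ s ∈ T, (X : ℤ[X]) ^ s := by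
      rw [Finset.sum_union d2, Finset.sum_image
        (by intro a _ b _ h; exact Nat.eq_of_mul_eq_mul_right hp0 h)]
    rw [← h1, ← h2, hsets]
  have hE : (∑ j ∈ Finset.range q, (X : ℤ[X]) ^ j)
      + ((X : ℤ[X]) ^ q - 1) * (∑ s ∈ T, (X : ℤ[X]) ^ s)
      = ∑ i ∈ Finset.range q, (X : ℤ[X]) ^ (i * p) := by
    have hXq : ∑ s ∈ T, (X : ℤ[X]) ^ (s + q) = (X : ℤ[X]) ^ q * ∑ s ∈ T, (X : ℤ[X]) ^ s := by
      rw [Finset.mul_sum]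
      exact Finset.sum_congr rfl fun s _ => by rw [pow_add, mul_comm]
    rw [hXq] at hsum
    linear_combination hsum
  have hgq : (∑ j ∈ Finset.range q, (X : ℤ[X]) ^ j) * (X - 1) = X ^ q - 1 := geom_sum_mul X q
  have hgp : (∑ i ∈ Finset.range q, (X : ℤ[X]) ^ (i * p)) * (X ^ p - 1) = X ^ (p * q) - 1 := by
    have h := geom_sum_mul ((X : ℤ[X]) ^ p) q
    have hrw : ∑ i ∈ Finset.range q, (X : ℤ[X]) ^ (i * p)
        = ∑ i ∈ Finset.range q, ((X : ℤ[X]) ^ p) ^ i :=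
      Finset.sum_congr rfl fun i _ => by rw [← pow_mul, mul_comm]
    rw [hrw, h, ← pow_mul]
  have hG : (1 + (X - 1) * ∑ s ∈ T, (X : ℤ[X]) ^ s) * ((X ^ p - 1) * (X ^ q - 1))
      = ((X : ℤ[X]) ^ (p * q) - 1) * (X - 1) := by
    linear_combination ((X : ℤ[X]) - 1) * ((X : ℤ[X]) ^ p - 1) * hE
      - ((X : ℤ[X]) ^ p - 1) * hgq + ((X : ℤ[X]) - 1) * hgp
  have hDne : ((X : ℤ[X]) ^ p - 1) * ((X : ℤ[X]) ^ q - 1) ≠ 0 := by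
    apply mul_ne_zero
    · have := Polynomial.monic_X_pow_sub_C (1 : ℤ) (show p ≠ 0 by omega)
      simpa using this.ne_zero
    · have := Polynomial.monic_X_pow_sub_C (1 : ℤ) (show q ≠ 0 by omega)
      simpa using this.ne_zero
  refine ⟨part1, ?_⟩
  exact mul_right_cancel₀ hDne (hF.symm.trans hG.symm)
end

section
/- Let p < q be primes. Every coefficient of the binary cyclotomic polynomial Φ_{pq} belongs to {-1, 0, 1}. -/
open Polynomial Finset

noncomputable def Gs (n m : ℕ) : ℤ[X] := ∑ i ∈ Finset.range m, (X : ℤ[X]) ^ (n * i)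

lemma Gs_mul (n m : ℕ) : Gs n m * ((X:ℤ[X])^n - 1) = X^(n*m) - 1 := by
  have := geom_sum_mul ((X:ℤ[X])^n) m
  simpa [Gs, pow_mul] using this

lemma prod_Gs (p q m n c : ℕ) :
    (X:ℤ[X])^c * Gs p m * Gs q n
      = ∑ x ∈ Finset.range m ×ˢ Finset.range n, (X:ℤ[X])^(c + p*x.1 + q*x.2) := by
  rw [Finset.sum_product]
  simp only [Gs, Finset.mul_sum, Finset.sum_mul, ← pow_add]
  exact Finset.sum_comm

lemma key_identity_s19 (a b c d n : ℕ) (h1 : a + c = n) (h2 : b + d = n) (h3 : a + b = n + 1) :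
    ((X:ℤ[X])^a - 1)*((X:ℤ[X])^b-1) - X*(((X:ℤ[X])^c-1)*((X:ℤ[X])^d-1))
      = ((X:ℤ[X])^n - 1)*(X-1) := by
  obtain ⟨rfl, rfl, rfl⟩ : a = d + 1 ∧ b = c + 1 ∧ n = c + d + 1 := by omega
  ring

lemma coeff_monsum {α : Type*} (s : Finset α) (e : α → ℕ) (k : ℕ) :
    ((∑ x ∈ s, (X:ℤ[X])^(e x)).coeff k) = ((s.filter fun x => e x = k).card : ℤ) := by
  rw [Polynomial.finset_sum_coeff]
  simp [Polynomial.coeff_X_pow, Finset.sum_boole, eq_comm]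

lemma rep_fst {p q i j i' j' : ℕ} (hcop : Nat.Coprime p q) (hi : i < q) (hi' : i' < q)
    (h : p*i + q*j = p*i' + q*j') : i = i' := by
  have h1 : p*i ≡ p*i' [MOD q] := by
    have : p*i + q*j ≡ p*i' + q*j' [MOD q] := h ▸ Nat.ModEq.refl _
    simpa [Nat.ModEq, Nat.add_mul_mod_self_left] using this
  have h2 : i ≡ i' [MOD q] := h1.cancel_left_of_coprime hcop.symm
  exact h2.eq_of_lt_of_lt hi hi'

lemma exists_rep (p q : ℕ) (hp : p.Prime) (hq : q.Prime) (hne : p ≠ q) :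
    ∃ α β : ℕ, 0 < α ∧ α < q ∧ 0 < β ∧ β < p ∧ p*α + q*β = p*q + 1 := by
  haveI : Fact q.Prime := ⟨hq⟩
  have hp0 : (p : ZMod q) ≠ 0 := by
    rw [Ne, ZMod.natCast_eq_zero_iff]
    exact fun h => hne ((Nat.prime_dvd_prime_iff_eq hq hp).mp h).symm
  set α := ((p : ZMod q)⁻¹).val with hα
  have hαlt : α < q := ZMod.val_lt _
  have hcast : (p : ZMod q) * (α : ZMod q) = 1 := by
    rw [hα, ZMod.natCast_val, ZMod.cast_id]
    exact mul_inv_cancel₀ hp0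
  have hα0 : 0 < α := by
    rcases Nat.eq_zero_or_pos α with h | h
    · exfalso
      rw [h] at hcast
      simp at hcast
    · exact h
  have hle : p * α + p ≤ p * q := by
    calc p * α + p ≤ p * (q-1) + p := by
          have : α ≤ q - 1 := by omega
          exact Nat.add_le_add_right (Nat.mul_le_mul_left _ this) p
      _ = p * q := by
          rw [← Nat.mul_succ]; congr 1; omega
  have hle2 : p * α ≤ p * q + 1 := by omega
  have hdvd : q ∣ (p * q + 1 - p * α) := by
    rw [← ZMod.natCast_eq_zero_iff]
    rw [Nat.cast_sub hle2]
    push_cast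
    rw [hcast]
    simp [ZMod.natCast_self]
  obtain ⟨β, hβ⟩ := hdvd
  have hc : q * p = p * q := Nat.mul_comm q p
  refine ⟨α, β, hα0, hαlt, ?_, ?_, ?_⟩
  · rcases Nat.eq_zero_or_pos β with h | h
    · subst h; simp at hβ; omega
    · exact h
  · have h4 : p * 1 ≤ p * α := Nat.mul_le_mul_left p hα0
    have hp2 := hp.two_le
    have : q * β < q * p := by omega
    exact Nat.lt_of_mul_lt_mul_left this
  · omega

lemma cyc_key (p q : ℕ) (hp : p.Prime) (hq : q.Prime) (hne : p ≠ q) :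
    cyclotomic (p*q) ℤ * (((X:ℤ[X])^p - 1) * ((X:ℤ[X])^q - 1))
      = ((X:ℤ[X])^(p*q) - 1) * (X - 1) := by
  haveI : Fact q.Prime := ⟨hq⟩
  have hnd : ¬ p ∣ q := fun h => hne ((Nat.prime_dvd_prime_iff_eq hp hq).mp h)
  have h1 : (expand ℤ p) (cyclotomic q ℤ) = cyclotomic (q*p) ℤ * cyclotomic q ℤ :=
    cyclotomic_expand_eq_cyclotomic_mul hp hnd ℤ
  have h2 : cyclotomic q ℤ * ((X:ℤ[X]) - 1) = (X:ℤ[X])^q - 1 :=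
    cyclotomic_prime_mul_X_sub_one ℤ q
  have h3 : (expand ℤ p) ((X:ℤ[X])^q - 1) = (X:ℤ[X])^(q*p) - 1 := by
    simp [← pow_mul, mul_comm]
  have h4 : (expand ℤ p) ((X:ℤ[X]) - 1) = (X:ℤ[X])^p - 1 := by simp
  rw [mul_comm p q]
  calc cyclotomic (q*p) ℤ * (((X:ℤ[X])^p-1)*((X:ℤ[X])^q-1))
      = (cyclotomic (q*p) ℤ * cyclotomic q ℤ) * ((X:ℤ[X])-1) * ((X:ℤ[X])^p-1) := by
        rw [mul_assoc (cyclotomic (q*p) ℤ * cyclotomic q ℤ), ← h2]; ring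
    _ = (expand ℤ p) (cyclotomic q ℤ) * ((expand ℤ p) ((X:ℤ[X]) - 1)) * ((X:ℤ[X])-1) := by
        rw [h1, h4]; ring
    _ = (expand ℤ p) (cyclotomic q ℤ * ((X:ℤ[X]) - 1)) * ((X:ℤ[X])-1) := by
        rw [map_mul]
    _ = ((X:ℤ[X])^(q*p) - 1) * ((X:ℤ[X])-1) := by rw [h2, h3]

lemma rep_unique {p q : ℕ} (hcop : Nat.Coprime p q) {i j i' j' : ℕ}
    (hi : i < q) (hi' : i' < q) (hq0 : 0 < q)
    (h : p*i + q*j = p*i' + q*j') : (i, j) = (i', j') := by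
  obtain rfl := rep_fst hcop hi hi' h
  have h2 : q*j = q*j' := by omega
  have := Nat.eq_of_mul_eq_mul_left hq0 h2
  subst this
  rfl

theorem binary_cyclotomic_coeffs_ternary (p q : ℕ) (hp : p.Prime) (hq : q.Prime)
    (hlt : p < q) :
    ∀ j : ℕ, (cyclotomic (p * q) ℤ).coeff j ∈ ({-1, 0, 1} : Set ℤ) := by
  intro k
  have hne : p ≠ q := ne_of_lt hlt
  have hcop : Nat.Coprime p q := (Nat.coprime_primes hp hq).mpr hne
  have hq0 : 0 < q := hq.pos
  obtain ⟨α, β, hα0, hαq, hβ0, hβp, hrel⟩ := exists_rep p q hp hq hne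
  set u := q - α with hu
  set v := p - β with hv
  have hu' : α + u = q := by omega
  have hv' : β + v = p := by omega
  set F : ℤ[X] := (X:ℤ[X])^0 * Gs p α * Gs q β - (X:ℤ[X])^1 * Gs p u * Gs q v with hFdef
  -- F satisfies the same multiplicative identity as the cyclotomic polynomial
  have e1 : ((X:ℤ[X])^0 * Gs p α * Gs q β) * (((X:ℤ[X])^p-1)*((X:ℤ[X])^q-1))
      = ((X:ℤ[X])^(p*α)-1) * ((X:ℤ[X])^(q*β)-1) := by
    rw [← Gs_mul p α, ← Gs_mul q β]; ring
  have e2 : ((X:ℤ[X])^1 * Gs p u * Gs q v) * (((X:ℤ[X])^p-1)*((X:ℤ[X])^q-1))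
      = X * (((X:ℤ[X])^(p*u)-1) * ((X:ℤ[X])^(q*v)-1)) := by
    rw [← Gs_mul p u, ← Gs_mul q v]; ring
  have hF : F * (((X:ℤ[X])^p-1)*((X:ℤ[X])^q-1)) = ((X:ℤ[X])^(p*q) - 1)*(X-1) := by
    rw [hFdef, sub_mul, e1, e2]
    apply key_identity_s19
    · rw [← Nat.mul_add, hu']
    · rw [← Nat.mul_add, hv', Nat.mul_comm]
    · exact hrel
  have hnz : (((X:ℤ[X])^p-1)*((X:ℤ[X])^q-1)) ≠ 0 := by
    apply mul_ne_zero
    · simpa using Polynomial.X_pow_sub_C_ne_zero hp.pos (1:ℤ)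
    · simpa using Polynomial.X_pow_sub_C_ne_zero hq.pos (1:ℤ)
  have hΦ : cyclotomic (p*q) ℤ = F :=
    mul_right_cancel₀ hnz (by rw [cyc_key p q hp hq hne, hF])
  -- coefficients
  have cA : ((X:ℤ[X])^0 * Gs p α * Gs q β).coeff k
      = (((Finset.range α ×ˢ Finset.range β).filter
          (fun x => 0 + p*x.1 + q*x.2 = k)).card : ℤ) := by
    rw [prod_Gs, coeff_monsum]
  have cB : ((X:ℤ[X])^1 * Gs p u * Gs q v).coeff k
      = (((Finset.range u ×ˢ Finset.range v).filter
          (fun x => 1 + p*x.1 + q*x.2 = k)).card : ℤ) := by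
    rw [prod_Gs, coeff_monsum]
  set a := ((Finset.range α ×ˢ Finset.range β).filter
      (fun x => 0 + p*x.1 + q*x.2 = k)).card with ha_def
  set b := ((Finset.range u ×ˢ Finset.range v).filter
      (fun x => 1 + p*x.1 + q*x.2 = k)).card with hb_def
  have ha : a ≤ 1 := by
    rw [ha_def, Finset.card_le_one]
    rintro ⟨i, j⟩ hm ⟨i', j'⟩ hm'
    simp only [Finset.mem_filter, Finset.mem_product, Finset.mem_range] at hm hm'
    exact rep_unique hcop (lt_trans hm.1.1 hαq) (lt_trans hm'.1.1 hαq) hq0 (by omega)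
  have hb : b ≤ 1 := by
    rw [hb_def, Finset.card_le_one]
    rintro ⟨i, j⟩ hm ⟨i', j'⟩ hm'
    simp only [Finset.mem_filter, Finset.mem_product, Finset.mem_range] at hm hm'
    exact rep_unique hcop (by omega) (by omega) hq0 (by omega)
  have hd : a = 0 ∨ b = 0 := by
    by_contra hcon
    push_neg at hcon
    obtain ⟨⟨i, j⟩, hm⟩ := Finset.card_pos.mp (Nat.pos_of_ne_zero hcon.1)
    obtain ⟨⟨i', j'⟩, hm'⟩ := Finset.card_pos.mp (Nat.pos_of_ne_zero hcon.2)
    simp only [Finset.mem_filter, Finset.mem_product, Finset.mem_range] at hm hm'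
    have e3 : q*(j+p) = q*j + q*p := Nat.mul_add q j p
    have e4 : p*(i'+α) = p*i' + p*α := Nat.mul_add p i' α
    have e5 : q*(j'+β) = q*j' + q*β := Nat.mul_add q j' β
    have e6 : q*p = p*q := Nat.mul_comm q p
    have heq : p*i + q*(j+p) = p*(i'+α) + q*(j'+β) := by omega
    have hfst : i = i' + α := rep_fst hcop (lt_trans hm.1.1 hαq) (by omega) heq
    omega
  rw [hΦ, hFdef, Polynomial.coeff_sub, cA, cB]
  simp only [Set.mem_insert_iff, Set.mem_singleton_iff]
  omega
end
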